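/- arXiv:1506.05241 — 2 statements merged into one kernel-verified Lean document; each statement's English description precedes it below -/
import Mathlib

section
/- Fix $m_0\in\mathbb{N}$, $\lambda_0>0$, a nonzero polynomial $p(z)=\sum_{j=0}^{\ell_0}\beta_j z^j$, $\varepsilon_0\in(0,1)$, $R_0>1$. Let $f(z)=\sum_{j=0}^{\ell_0}\frac{j!}{(j+m_0)!}\frac{\beta_j}{\lambda_0^{j+m_0}} z^{j+m_0}$, set $N_0=m_0+\ell_0$, $M_0=\max_{0\le j\le \ell_0}|\beta_j|$, $M_1=M_0\sum_{j=0}^{\ell_0} R_0^j$. Then for every $\lambda\in[\lambda_0,\lambda_0(1+\varepsilon_0/M_1)^{1/N_0})$ and every $z$ with $|z|\le R_0$, one has $|\lambda_0^{m_0} f^{(m_0)}(\lambda_0 z)-\lambda^{m_0} f^{(m_0)}(\lambda z)|<\varepsilon_0$. -/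
open Finset

lemma key_iter (m : ℕ) : ∀ (s : Finset ℕ) (c : ℕ → ℂ),
    iteratedDeriv m (fun z : ℂ => ∑ j ∈ s, c j * z ^ (j + m)) =
    fun z : ℂ => ∑ j ∈ s, c j * ((j + m).descFactorial m : ℂ) * z ^ j := by
  induction m with
  | zero => intro s c; simp
  | succ m ih =>
    intro s c
    rw [iteratedDeriv_succ']
    have hd : deriv (fun z : ℂ => ∑ j ∈ s, c j * z ^ (j + (m+1))) =
        fun z : ℂ => ∑ j ∈ s, (c j * (j + m + 1 : ℕ)) * z ^ (j + m) := by
      funext z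
      rw [deriv_fun_sum (fun i _ => ((differentiable_pow _).differentiableAt).const_mul _)]
      refine Finset.sum_congr rfl fun j _ => ?_
      rw [deriv_const_mul _ (differentiable_pow _).differentiableAt, deriv_pow_field]
      have e : j + (m+1) - 1 = j + m := by omega
      rw [e]
      push_cast
      ring
    rw [hd, ih s (fun j => c j * (j + m + 1 : ℕ))]
    funext z
    refine Finset.sum_congr rfl fun j _ => ?_
    rw [show j + (m+1) = (j+m)+1 from rfl, Nat.succ_descFactorial_succ]
    push_cast
    ring

theorem stmt_2 (m₀ : ℕ) (hm₀ : 1 ≤ m₀) (lam₀ : ℝ) (hlam₀ : 0 < lam₀)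
    (ℓ₀ : ℕ) (β : ℕ → ℂ) (hp : ∃ j ∈ range (ℓ₀ + 1), β j ≠ 0)
    (ε₀ : ℝ) (hε₀ : ε₀ ∈ Set.Ioo (0 : ℝ) 1) (R₀ : ℝ) (hR₀ : 1 < R₀)
    (f : ℂ → ℂ)
    (hf : ∀ z : ℂ, f z = ∑ j ∈ range (ℓ₀ + 1),
      ((j.factorial : ℂ) / ((j + m₀).factorial : ℂ)) * (β j / (lam₀ : ℂ) ^ (j + m₀)) * z ^ (j + m₀))
    (N₀ : ℕ) (hN₀ : N₀ = m₀ + ℓ₀)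
    (M₀ : ℝ) (hM₀ : M₀ = (range (ℓ₀ + 1)).sup' (by simp) (fun j => ‖β j‖))
    (M₁ : ℝ) (hM₁ : M₁ = M₀ * ∑ j ∈ range (ℓ₀ + 1), R₀ ^ j)
    (lam : ℝ) (hlam : lam ∈ Set.Ico lam₀ (lam₀ * (1 + ε₀ / M₁) ^ ((1 : ℝ) / N₀)))
    (z : ℂ) (hz : ‖z‖ ≤ R₀) :
    ‖(lam₀ : ℂ) ^ m₀ * iteratedDeriv m₀ f ((lam₀ : ℂ) * z)
      - (lam : ℂ) ^ m₀ * iteratedDeriv m₀ f ((lam : ℂ) * z)‖ < ε₀ := by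
  have hl0 : (lam₀ : ℂ) ≠ 0 := by exact_mod_cast hlam₀.ne'
  have hff : f = fun z : ℂ => ∑ j ∈ range (ℓ₀ + 1),
      ((j.factorial : ℂ) / ((j + m₀).factorial : ℂ)) * (β j / (lam₀ : ℂ) ^ (j + m₀)) * z ^ (j + m₀) :=
    funext hf
  rw [hff, key_iter]
  -- evaluation of the dilated derivative
  have hcast : ∀ j : ℕ, ((j.factorial : ℂ) / ((j + m₀).factorial : ℂ)) *
      ((j + m₀).descFactorial m₀ : ℂ) = 1 := by
    intro j
    have h0 := Nat.factorial_mul_descFactorial (show m₀ ≤ j + m₀ by omega)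
    rw [Nat.add_sub_cancel] at h0
    have h1 : (j.factorial : ℂ) * ((j + m₀).descFactorial m₀ : ℂ) = ((j + m₀).factorial : ℂ) := by
      exact_mod_cast congrArg (Nat.cast : ℕ → ℂ) h0
    rw [div_mul_eq_mul_div, h1, div_self (Nat.cast_ne_zero.mpr (Nat.factorial_ne_zero _))]
  have heval : ∀ t : ℝ, (t : ℂ) ^ m₀ * (∑ j ∈ range (ℓ₀ + 1),
      ((j.factorial : ℂ) / ((j + m₀).factorial : ℂ)) * (β j / (lam₀ : ℂ) ^ (j + m₀)) *
        ((j + m₀).descFactorial m₀ : ℂ) * ((t : ℂ) * z) ^ j) =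
      ∑ j ∈ range (ℓ₀ + 1), β j * z ^ j * (((t / lam₀ : ℝ) : ℂ)) ^ (j + m₀) := by
    intro t
    rw [Finset.mul_sum]
    refine Finset.sum_congr rfl fun j _ => ?_
    have h1 : ((j.factorial : ℂ) / ((j + m₀).factorial : ℂ)) * (β j / (lam₀ : ℂ) ^ (j + m₀)) *
        ((j + m₀).descFactorial m₀ : ℂ) = β j / (lam₀ : ℂ) ^ (j + m₀) := by
      rw [mul_right_comm, hcast, one_mul]
    rw [h1]
    push_cast
    rw [div_pow, mul_pow]
    field_simp
    ring
  rw [heval, heval, ← Finset.sum_sub_distrib]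
  have hrho : 1 ≤ lam / lam₀ := (one_le_div hlam₀).mpr hlam.1
  have hll : lam₀ / lam₀ = (1 : ℝ) := div_self hlam₀.ne'
  -- positivity of M₀, M₁
  obtain ⟨j₀, hj₀, hβj₀⟩ := hp
  have hM₀pos : 0 < M₀ := by
    rw [hM₀]
    exact lt_of_lt_of_le (norm_pos_iff.mpr hβj₀)
      (Finset.le_sup' (fun j => ‖β j‖) hj₀)
  have hsumpos : (1:ℝ) ≤ ∑ j ∈ range (ℓ₀ + 1), R₀ ^ j := by
    calc (1:ℝ) = R₀ ^ 0 := (pow_zero R₀).symm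
    _ ≤ ∑ j ∈ range (ℓ₀ + 1), R₀ ^ j :=
      Finset.single_le_sum (fun j _ => by positivity) (by simp)
  have hM₁pos : 0 < M₁ := by rw [hM₁]; nlinarith
  have hN₀pos : 0 < N₀ := by omega
  -- (lam / lam₀) ^ N₀ < 1 + ε₀ / M₁
  have hρN : (lam / lam₀) ^ N₀ < 1 + ε₀ / M₁ := by
    have hB : (0:ℝ) < 1 + ε₀ / M₁ := by have := div_pos hε₀.1 hM₁pos; linarith
    have hρlt : (lam / lam₀) < (1 + ε₀ / M₁) ^ ((1 : ℝ) / N₀) := by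
      rw [div_lt_iff₀ hlam₀, mul_comm]
      exact hlam.2
    calc (lam / lam₀) ^ N₀ < ((1 + ε₀ / M₁) ^ ((1 : ℝ) / N₀)) ^ N₀ :=
          pow_lt_pow_left₀ hρlt (by linarith) (by omega)
      _ = 1 + ε₀ / M₁ := by
          rw [← Real.rpow_natCast ((1 + ε₀ / M₁) ^ ((1 : ℝ) / N₀)) N₀, ← Real.rpow_mul hB.le,
            one_div, inv_mul_cancel₀ (by exact_mod_cast hN₀pos.ne'), Real.rpow_one]
  -- bound the sum
  have hbound : ‖∑ j ∈ range (ℓ₀ + 1),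
      (β j * z ^ j * (((lam₀ / lam₀ : ℝ) : ℂ)) ^ (j + m₀) -
       β j * z ^ j * (((lam / lam₀ : ℝ) : ℂ)) ^ (j + m₀))‖ ≤
      ∑ j ∈ range (ℓ₀ + 1), M₀ * R₀ ^ j * ((lam / lam₀) ^ N₀ - 1) := by
    refine le_trans (norm_sum_le _ _) (Finset.sum_le_sum fun j hj => ?_)
    have hterm : β j * z ^ j * (((lam₀ / lam₀ : ℝ) : ℂ)) ^ (j + m₀) -
        β j * z ^ j * (((lam / lam₀ : ℝ) : ℂ)) ^ (j + m₀) =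
        β j * z ^ j * ((1 : ℂ) - (((lam / lam₀) : ℝ) : ℂ) ^ (j + m₀)) := by
      rw [hll]; push_cast; ring
    rw [hterm]
    rw [norm_mul, norm_mul]
    have habs : ‖(1 : ℂ) - (((lam / lam₀) : ℝ) : ℂ) ^ (j + m₀)‖ = (lam / lam₀) ^ (j + m₀) - 1 := by
      have : ((1 : ℂ) - (((lam / lam₀) : ℝ) : ℂ) ^ (j + m₀)) = (((1 - (lam / lam₀) ^ (j + m₀) : ℝ)) : ℂ) := by
        push_cast; ring
      rw [this, Complex.norm_real, Real.norm_eq_abs, abs_sub_comm, abs_of_nonneg (by nlinarith [one_le_pow₀ hrho (n := j + m₀)])]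
    rw [habs, norm_pow]
    have h1 : ‖β j‖ ≤ M₀ := by
      rw [hM₀]; exact Finset.le_sup' (fun j => ‖β j‖) hj
    have h2 : ‖z‖ ^ j ≤ R₀ ^ j :=
      pow_le_pow_left₀ (norm_nonneg _) hz j
    have h3 : (lam / lam₀) ^ (j + m₀) - 1 ≤ (lam / lam₀) ^ N₀ - 1 := by
      have : j + m₀ ≤ N₀ := by
        simp only [Finset.mem_range] at hj; omega
      have := pow_le_pow_right₀ hrho this
      linarith
    have hnn : (0:ℝ) ≤ (lam / lam₀) ^ (j + m₀) - 1 := by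
      nlinarith [one_le_pow₀ hrho (n := j + m₀)]
    exact mul_le_mul (mul_le_mul h1 h2 (by positivity) hM₀pos.le) h3 hnn (by positivity)
  refine lt_of_le_of_lt hbound ?_
  have hsum : ∑ j ∈ range (ℓ₀ + 1), M₀ * R₀ ^ j * ((lam / lam₀) ^ N₀ - 1) = M₁ * ((lam / lam₀) ^ N₀ - 1) := by
    rw [hM₁, ← Finset.sum_mul, ← Finset.mul_sum]
  rw [hsum]
  have : M₁ * ((lam / lam₀) ^ N₀ - 1) < M₁ * (ε₀ / M₁) := by
    apply mul_lt_mul_of_pos_left _ hM₁pos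
    linarith
  rw [mul_div_cancel₀ _ hM₁pos.ne'] at this
  exact this
end

section
/- Let $m_{i_0}<m_{j_0}$ be positive integers, $0<\lambda_0<\delta_{j_0}$, $R_0>1$, and $p(z)=\sum_{k=0}^{\ell_0}\beta_k z^k$ with $M_0=\max_k|\beta_k|$. Let $f_{j_0}(z)=\sum_{k=0}^{\ell_0}\frac{k!}{(k+m_{j_0})!}\frac{\beta_k}{\delta_{j_0}^{k+m_{j_0}}} z^{k+m_{j_0}}$. Assume $M_0\,\ell_0!\,(2R_0)^v/v!<1$ for every integer $v\ge m_{j_0}-m_{i_0}$. Then $\sup_{|z|\le R_0}|\lambda_0^{m_{i_0}} f_{j_0}^{(m_{i_0})}(\lambda_0 z)| < 2^{-(m_{j_0}-m_{i_0}-1)}$. -/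
open Finset

lemma iteratedDeriv_polyEval (k : ℕ) (p : Polynomial ℂ) :
    iteratedDeriv k (fun x => p.eval x) = fun x => (Polynomial.derivative^[k] p).eval x := by
  induction k with
  | zero => simp
  | succ k ih =>
    rw [iteratedDeriv_succ, ih]
    funext x
    rw [Function.iterate_succ_apply']
    exact Polynomial.deriv (p := Polynomial.derivative^[k] p)

theorem stmt_6 (mi mj : ℕ) (hmi : 0 < mi) (hij : mi < mj)
    (lam₀ δj : ℝ) (hlam₀ : 0 < lam₀) (hlt : lam₀ < δj)
    (R₀ : ℝ) (hR₀ : 1 < R₀)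
    (ℓ₀ : ℕ) (β : ℕ → ℂ)
    (M₀ : ℝ) (hM₀ : M₀ = (range (ℓ₀ + 1)).sup' (by simp) (fun j => ‖β j‖))
    (f : ℂ → ℂ)
    (hf : ∀ z : ℂ, f z = ∑ k ∈ range (ℓ₀ + 1),
      ((k.factorial : ℂ) / ((k + mj).factorial : ℂ)) * (β k / (δj : ℂ) ^ (k + mj)) * z ^ (k + mj))
    (hsmall : ∀ v : ℕ, mj - mi ≤ v → M₀ * (ℓ₀.factorial : ℝ) * (2 * R₀) ^ v / (v.factorial : ℝ) < 1)
    (z : ℂ) (hz : ‖z‖ ≤ R₀) :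
    ‖(lam₀ : ℂ) ^ mi * iteratedDeriv mi f ((lam₀ : ℂ) * z)‖
      < (2 : ℝ) ^ (-((mj : ℤ) - (mi : ℤ) - 1)) := by
  have hδ : (0:ℝ) < δj := hlam₀.trans hlt
  set c : ℕ → ℂ := fun k => ((k.factorial : ℂ) / ((k + mj).factorial : ℂ)) * (β k / (δj : ℂ) ^ (k + mj)) with hc
  set P : Polynomial ℂ := ∑ k ∈ range (ℓ₀ + 1), Polynomial.C (c k) * Polynomial.X ^ (k + mj) with hP
  have hfeq : f = fun x => P.eval x := by
    funext x
    rw [hf x]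
    simp [hP, hc, Polynomial.eval_finset_sum]
  set w : ℂ := (lam₀ : ℂ) * z with hw
  have hderiv : iteratedDeriv mi f w
      = ∑ k ∈ range (ℓ₀ + 1), c k * (((k + mj).descFactorial mi : ℂ) * w ^ (k + mj - mi)) := by
    rw [hfeq, iteratedDeriv_polyEval]
    simp only [hP, Polynomial.iterate_derivative_sum, Polynomial.eval_finset_sum]
    refine Finset.sum_congr rfl fun k _ => ?_
    rw [Polynomial.iterate_derivative_C_mul, Polynomial.iterate_derivative_X_pow_eq_natCast_mul]
    simp [mul_assoc]
  rw [hderiv, Finset.mul_sum]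
  -- per-term bound
  have key : ∀ k ∈ range (ℓ₀ + 1),
      ‖(lam₀ : ℂ) ^ mi * (c k * (((k + mj).descFactorial mi : ℂ) * w ^ (k + mj - mi)))‖
        < (1/2 : ℝ) ^ (mj - mi) * (1/2) ^ k := by
    intro k hk
    have hkl : k ≤ ℓ₀ := Nat.lt_succ_iff.mp (Finset.mem_range.mp hk)
    set v : ℕ := k + mj - mi with hv
    have hvmi : mj - mi ≤ v := by omega
    have hmiv : mi + v = k + mj := by omega
    have hβk : ‖β k‖ ≤ M₀ := by
      rw [hM₀]; exact Finset.le_sup' (fun j => ‖β j‖) hk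
    have hM₀0 : 0 ≤ M₀ := (norm_nonneg _).trans hβk
    have hwabs : ‖w‖ ≤ lam₀ * R₀ := by
      rw [hw, norm_mul, Complex.norm_real, Real.norm_eq_abs, abs_of_pos hlam₀]
      exact mul_le_mul_of_nonneg_left hz hlam₀.le
    have habs : ‖(lam₀ : ℂ) ^ mi * (c k * (((k + mj).descFactorial mi : ℂ) * w ^ v))‖
        = lam₀ ^ mi * (((k.factorial : ℝ) / ((k + mj).factorial : ℝ)) * (‖β k‖ / δj ^ (k + mj)))
          * ((k + mj).descFactorial mi : ℝ) * (‖w‖) ^ v := by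
      rw [hc]
      simp only [norm_mul, norm_div, norm_pow, Complex.norm_natCast, Complex.norm_real, Real.norm_eq_abs,
        abs_of_pos hlam₀, abs_of_pos hδ]
      ring
    rw [habs]
    have hvfac : (0:ℝ) < (v.factorial : ℝ) := by positivity
    have hDf : ((k + mj).descFactorial mi : ℝ) = ((k + mj).factorial : ℝ) / (v.factorial : ℝ) := by
      rw [eq_div_iff hvfac.ne', ← Nat.cast_mul, mul_comm,
        Nat.factorial_mul_descFactorial (by omega : mi ≤ k + mj)]
    have step1 : lam₀ ^ mi * (((k.factorial : ℝ) / ((k + mj).factorial : ℝ)) * (‖β k‖ / δj ^ (k + mj)))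
          * ((k + mj).descFactorial mi : ℝ) * (‖w‖) ^ v
        ≤ lam₀ ^ mi * (((k.factorial : ℝ) / ((k + mj).factorial : ℝ)) * (M₀ / δj ^ (k + mj)))
          * ((k + mj).descFactorial mi : ℝ) * (lam₀ * R₀) ^ v := by
      gcongr
    have step2 : lam₀ ^ mi * (((k.factorial : ℝ) / ((k + mj).factorial : ℝ)) * (M₀ / δj ^ (k + mj)))
          * ((k + mj).descFactorial mi : ℝ) * (lam₀ * R₀) ^ v
        = (lam₀ / δj) ^ (k + mj) * ((k.factorial : ℝ) / (v.factorial : ℝ) * M₀ * R₀ ^ v) := by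
      have hfacpos : (0:ℝ) < ((k + mj).factorial : ℝ) := by positivity
      rw [hDf, mul_pow, ← hmiv, pow_add, div_pow]
      field_simp
      ring
    have step3 : (lam₀ / δj) ^ (k + mj) * ((k.factorial : ℝ) / (v.factorial : ℝ) * M₀ * R₀ ^ v)
        ≤ (ℓ₀.factorial : ℝ) / (v.factorial : ℝ) * M₀ * R₀ ^ v := by
      have h1 : (lam₀ / δj) ^ (k + mj) ≤ 1 :=
        pow_le_one₀ (by positivity) ((div_le_one hδ).mpr hlt.le)
      have h2 : (k.factorial : ℝ) / (v.factorial : ℝ) * M₀ * R₀ ^ v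
          ≤ (ℓ₀.factorial : ℝ) / (v.factorial : ℝ) * M₀ * R₀ ^ v := by
        gcongr
      calc (lam₀ / δj) ^ (k + mj) * ((k.factorial : ℝ) / (v.factorial : ℝ) * M₀ * R₀ ^ v)
          ≤ 1 * ((k.factorial : ℝ) / (v.factorial : ℝ) * M₀ * R₀ ^ v) := by
            gcongr
        _ = (k.factorial : ℝ) / (v.factorial : ℝ) * M₀ * R₀ ^ v := one_mul _
        _ ≤ _ := h2
    have step4 : (ℓ₀.factorial : ℝ) / (v.factorial : ℝ) * M₀ * R₀ ^ v < (1/2 : ℝ) ^ v := by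
      have h := hsmall v hvmi
      rw [mul_pow] at h
      have h2v : (0:ℝ) < 2 ^ v := by positivity
      rw [div_pow, one_pow, lt_div_iff₀ h2v]
      calc (ℓ₀.factorial : ℝ) / (v.factorial : ℝ) * M₀ * R₀ ^ v * 2 ^ v
          = M₀ * (ℓ₀.factorial : ℝ) * (2 ^ v * R₀ ^ v) / (v.factorial : ℝ) := by
            field_simp
        _ < 1 := h
    have hsplit : (1/2 : ℝ) ^ v = (1/2 : ℝ) ^ (mj - mi) * (1/2) ^ k := by
      rw [← pow_add]
      congr 1
      omega
    calc lam₀ ^ mi * (((k.factorial : ℝ) / ((k + mj).factorial : ℝ)) * (‖β k‖ / δj ^ (k + mj)))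
          * ((k + mj).descFactorial mi : ℝ) * (‖w‖) ^ v
        ≤ _ := step1
      _ = _ := step2
      _ ≤ _ := step3
      _ < (1/2 : ℝ) ^ v := step4
      _ = _ := hsplit
  -- sum up
  have hgeom : ∑ k ∈ range (ℓ₀ + 1), (1/2 : ℝ) ^ k ≤ 2 := by
    rw [geom_sum_eq (by norm_num : (1/2 : ℝ) ≠ 1)]
    rw [div_le_iff_of_neg (by norm_num : (1/2 : ℝ) - 1 < 0)]
    have := pow_nonneg (by norm_num : (0:ℝ) ≤ 1/2) (ℓ₀ + 1)
    linarith
  have hd : (-((mj : ℤ) - (mi : ℤ) - 1)) = -((mj - mi - 1 : ℕ) : ℤ) := by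
    push_cast [Nat.cast_sub (by omega : 1 ≤ mj - mi), Nat.cast_sub hij.le]
    ring
  have hrhs : (2 : ℝ) ^ (-((mj : ℤ) - (mi : ℤ) - 1)) = (1/2 : ℝ) ^ (mj - mi) * 2 := by
    rw [hd, zpow_neg, zpow_natCast]
    have : mj - mi = (mj - mi - 1) + 1 := by omega
    rw [this, pow_succ]
    rw [div_pow, one_pow]
    field_simp
    simp
  rw [hrhs]
  calc ‖∑ k ∈ range (ℓ₀ + 1),
        (lam₀ : ℂ) ^ mi * (c k * (((k + mj).descFactorial mi : ℂ) * w ^ (k + mj - mi)))‖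
      ≤ ∑ k ∈ range (ℓ₀ + 1), ‖
        (lam₀ : ℂ) ^ mi * (c k * (((k + mj).descFactorial mi : ℂ) * w ^ (k + mj - mi)))‖ :=
        norm_sum_le _ _
    _ < ∑ k ∈ range (ℓ₀ + 1), (1/2 : ℝ) ^ (mj - mi) * (1/2) ^ k :=
        Finset.sum_lt_sum_of_nonempty (by simp) key
    _ = (1/2 : ℝ) ^ (mj - mi) * ∑ k ∈ range (ℓ₀ + 1), (1/2 : ℝ) ^ k := by
        rw [Finset.mul_sum]
    _ ≤ (1/2 : ℝ) ^ (mj - mi) * 2 := by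
        gcongr
end
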